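/- Let C be a linear code (GF(4)-linear subspace) in GF(4)^N, let z ∈ GF(4)^N, and let p0 ∈ [1/4, 1]. Then F_{z−C}(p0) ≤ F_{C}(p0). -/

import Mathlib

/-!
GF(4) is modeled as `GaloisField 2 2`, vectors in GF(4)^N as `Fin N → GaloisField 2 2`,
Hamming weight as `hammingNorm`. `Fw C p0` is the function
`F_C(p0) = (1/|C|) · Σ_{v ∈ C} p0^(N−w(v)) · ((1−p0)/3)^(w(v))`,
`translateSet z C` is the translate `z − C`, and `codeFinset` turns a linear code
(a `Submodule`) into the corresponding `Finset`.
-/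

open scoped Classical

noncomputable instance : Fintype (GaloisField 2 2) := Fintype.ofFinite _

noncomputable def Fw {N : ℕ} (C : Finset (Fin N → GaloisField 2 2)) (p0 : ℝ) : ℝ :=
  ((C.card : ℝ))⁻¹ *
    ∑ v ∈ C, p0 ^ (N - hammingNorm v) * ((1 - p0) / 3) ^ hammingNorm v

noncomputable def translateSet {N : ℕ} (z : Fin N → GaloisField 2 2)
    (C : Finset (Fin N → GaloisField 2 2)) : Finset (Fin N → GaloisField 2 2) :=
  C.image fun c => z - c

noncomputable def codeFinset {N : ℕ}
    (C : Submodule (GaloisField 2 2) (Fin N → GaloisField 2 2)) :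
    Finset (Fin N → GaloisField 2 2) :=
  Finset.univ.filter (· ∈ C)

namespace KloveAux

abbrev K4 := GaloisField 2 2

lemma card_K4 : Fintype.card K4 = 4 := by
  rw [← Nat.card_eq_fintype_card, GaloisField.card 2 2 (by norm_num)]; norm_num

lemma pow4 (x : K4) : x ^ 4 = x := by
  have h := FiniteField.pow_card x
  rwa [card_K4] at h

/-- trace-like map -/
noncomputable def t (x : K4) : K4 := x ^ 2 + x

lemma t_add (a b : K4) : t (a + b) = t a + t b := by
  simp only [t, add_pow_char]
  ring

lemma t_idem (x : K4) : t x = 0 ∨ t x = 1 := by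
  have h : t x ^ 2 = t x := by
    simp only [t, add_pow_char]
    rw [show (x ^ 2) ^ 2 = x ^ 4 by ring, pow4]
    ring
  have : t x * (t x - 1) = 0 := by ring_nf; linear_combination h
  rcases mul_eq_zero.mp this with h' | h'
  · exact Or.inl h'
  · exact Or.inr (by linear_combination h')

/-- quadratic character (sign additive character) of GF(4) -/
noncomputable def χ (x : K4) : ℝ := if t x = 0 then 1 else -1

lemma chi_zero : χ 0 = 1 := by simp [χ, t]

lemma chi_vals (x : K4) : χ x = 1 ∨ χ x = -1 := by
  unfold χ; split <;> simp

lemma chi_le_one (x : K4) : χ x ≤ 1 := by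
  rcases chi_vals x with h | h <;> rw [h] <;> norm_num

lemma chi_add (a b : K4) : χ (a + b) = χ a * χ b := by
  unfold χ
  rw [t_add]
  rcases t_idem a with ha | ha <;> rcases t_idem b with hb | hb <;>
    simp [ha, hb, CharTwo.add_self_eq_zero, one_ne_zero]

lemma chi_neg (a : K4) : χ (-a) = χ a := by rw [CharTwo.neg_eq]

lemma exists_chi_neg : ∃ a : K4, χ a = -1 := by
  by_contra h
  push_neg at h
  have ht : ∀ x : K4, t x = 0 := by
    intro x
    by_contra hx
    exact h x (by simp [χ, hx])
  have hfix : ∀ x : K4, x ^ 2 = x := by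
    intro x
    have := ht x
    unfold t at this
    have hneg : -x = x := CharTwo.neg_eq x
    have h2 : x ^ 2 = -x := eq_neg_of_add_eq_zero_left this
    rw [h2, hneg]
  have hsub : (Finset.univ : Finset K4) ⊆ {0, 1} := by
    intro x _
    rcases eq_or_ne x 0 with h0 | h0
    · simp [h0]
    · have : x * x = x * 1 := by rw [mul_one, ← sq, hfix]
      have := mul_left_cancel₀ h0 this
      simp [this]
  have hle := Finset.card_le_card hsub
  rw [Finset.card_univ, card_K4] at hle
  have : ({0, 1} : Finset K4).card ≤ 2 := Finset.card_insert_le _ _ |>.trans (by simp)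
  omega

lemma sum_chi : ∑ x : K4, χ x = 0 := by
  obtain ⟨a, ha⟩ := exists_chi_neg
  have h1 : ∑ x : K4, χ (x + a) = ∑ x : K4, χ x :=
    Fintype.sum_equiv (Equiv.addRight a) _ _ (fun x => rfl)
  have h2 : ∑ x : K4, χ (x + a) = -∑ x : K4, χ x := by
    simp only [chi_add, ha, mul_neg, mul_one]
    rw [← Finset.sum_neg_distrib]
  linarith [h1, h2.symm]

lemma sum_chi_mul {a : K4} (ha : a ≠ 0) : ∑ x : K4, χ (x * a) = 0 := by
  have := Fintype.sum_equiv (Equiv.mulRight₀ a ha) (fun x => χ (x * a)) χ (fun x => rfl)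
  rw [this, sum_chi]

section Main

variable (p0 : ℝ)

/-- weight factor per coordinate -/
noncomputable def g (x : K4) : ℝ := if x = 0 then p0 else (1 - p0) / 3

/-- Fourier transform per coordinate -/
noncomputable def ghat (x : K4) : ℝ := if x = 0 then 1 else (4 * p0 - 1) / 3

lemma L1 (a : K4) : ∑ x : K4, ghat p0 x * χ (x * a) = 4 * g p0 a := by
  have key : ∀ F : K4 → ℝ, ∑ x : K4, F x = F 0 + ∑ x ∈ Finset.univ.erase 0, F x := by
    intro F
    rw [Finset.add_sum_erase _ F (Finset.mem_univ 0)]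
  rcases eq_or_ne a 0 with rfl | ha
  · rw [key]
    have : ∀ x ∈ Finset.univ.erase (0 : K4), ghat p0 x * χ (x * 0) = (4 * p0 - 1) / 3 := by
      intro x hx
      rw [Finset.mem_erase] at hx
      simp [ghat, hx.1, mul_zero, chi_zero]
    rw [Finset.sum_congr rfl this, Finset.sum_const, Finset.card_erase_of_mem (Finset.mem_univ _),
      Finset.card_univ, card_K4]
    simp [ghat, g, chi_zero]
    ring
  · rw [key]
    have h0 : ghat p0 0 * χ (0 * a) = 1 := by simp [ghat, chi_zero]
    have hstep : ∀ x ∈ Finset.univ.erase (0 : K4),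
        ghat p0 x * χ (x * a) = (4 * p0 - 1) / 3 * χ (x * a) := by
      intro x hx
      rw [Finset.mem_erase] at hx
      simp [ghat, hx.1]
    rw [h0, Finset.sum_congr rfl hstep, ← Finset.mul_sum]
    have herase : ∑ x ∈ Finset.univ.erase (0 : K4), χ (x * a) = -1 := by
      have := Finset.sum_erase_eq_sub (f := fun x : K4 => χ (x * a)) (Finset.mem_univ 0)
      rw [this, sum_chi_mul ha]
      simp [chi_zero]
    rw [herase]
    simp [g, ha]
    ring

variable {N : ℕ}

noncomputable def f (v : Fin N → K4) : ℝ := ∏ i, g p0 (v i)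

noncomputable def fhat (u : Fin N → K4) : ℝ := ∏ i, ghat p0 (u i)

noncomputable def B (u v : Fin N → K4) : K4 := ∑ i, u i * v i

lemma chi_finsum {ι : Type*} (s : Finset ι) (a : ι → K4) :
    χ (∑ i ∈ s, a i) = ∏ i ∈ s, χ (a i) := by
  classical
  induction s using Finset.induction_on with
  | empty => simp [chi_zero]
  | insert x s' hx ih => rw [Finset.sum_insert hx, Finset.prod_insert hx, chi_add, ih]

lemma chi_B (u v : Fin N → K4) : χ (B u v) = ∏ i, χ (u i * v i) := chi_finsum _ _

lemma L2 (v : Fin N → K4) :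
    (4 : ℝ) ^ N * f p0 v = ∑ u : Fin N → K4, fhat p0 u * χ (B u v) := by
  have step : ∀ u : Fin N → K4, fhat p0 u * χ (B u v)
      = ∏ i, (ghat p0 (u i) * χ (u i * v i)) := by
    intro u
    rw [fhat, chi_B, Finset.prod_mul_distrib]
  rw [Finset.sum_congr rfl (fun u _ => step u)]
  rw [← Fintype.piFinset_univ]
  have hps := Finset.prod_univ_sum (fun _ : Fin N => (Finset.univ : Finset K4))
    (fun i x => ghat p0 x * χ (x * v i))
  rw [← hps]
  have : ∀ i : Fin N, ∑ x : K4, ghat p0 x * χ (x * v i) = 4 * g p0 (v i) := fun i => L1 p0 (v i)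
  rw [Finset.prod_congr rfl (fun i _ => this i), Finset.prod_mul_distrib, Finset.prod_const,
    Finset.card_univ, Fintype.card_fin, f]

lemma B_add_right (u a b : Fin N → K4) : B u (a + b) = B u a + B u b := by
  simp [B, mul_add, Finset.sum_add_distrib]

lemma sub_eq_add' (a b : Fin N → K4) : a - b = a + b := by
  funext i
  exact CharTwo.sub_eq_add _ _

noncomputable def S (C : Submodule K4 (Fin N → K4)) (u : Fin N → K4) : ℝ :=
  ∑ c ∈ codeFinset C, χ (B u c)

lemma mem_codeFinset (C : Submodule K4 (Fin N → K4)) (c : Fin N → K4) :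
    c ∈ codeFinset C ↔ c ∈ C := by simp [codeFinset]

lemma S_nonneg (C : Submodule K4 (Fin N → K4)) (u : Fin N → K4) : 0 ≤ S C u := by
  by_cases h : ∃ c0 ∈ codeFinset C, χ (B u c0) = -1
  · obtain ⟨c0, hc0, hchi⟩ := h
    have hc0' : c0 ∈ C := (mem_codeFinset C c0).mp hc0
    have hbij : ∑ c ∈ codeFinset C, χ (B u (c + c0)) = ∑ c ∈ codeFinset C, χ (B u c) := by
      apply Finset.sum_nbij' (fun c => c + c0) (fun c => c - c0)
      · intro a ha
        rw [mem_codeFinset] at ha ⊢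
        exact C.add_mem ha hc0'
      · intro a ha
        rw [mem_codeFinset] at ha ⊢
        exact C.sub_mem ha hc0'
      · intro a _; simp
      · intro a _; simp
      · intro a _; rfl
    have hneg : ∑ c ∈ codeFinset C, χ (B u (c + c0)) = -∑ c ∈ codeFinset C, χ (B u c) := by
      have : ∀ c ∈ codeFinset C, χ (B u (c + c0)) = -χ (B u c) := by
        intro c _
        rw [B_add_right, chi_add, hchi]
        ring
      rw [Finset.sum_congr rfl this, Finset.sum_neg_distrib]
    have hz : S C u = 0 := by
      unfold S
      have := hbij.symm.trans hneg
      linarith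
    rw [hz]
  · push_neg at h
    apply Finset.sum_nonneg
    intro c hc
    rcases chi_vals (B u c) with h1 | h1
    · rw [h1]; norm_num
    · exact absurd h1 (h c hc)

lemma key_id (C : Submodule K4 (Fin N → K4)) (z : Fin N → K4) :
    (4 : ℝ) ^ N * ∑ c ∈ codeFinset C, f p0 (z - c)
      = ∑ u : Fin N → K4, fhat p0 u * χ (B u z) * S C u := by
  rw [Finset.mul_sum]
  have step : ∀ c ∈ codeFinset C, (4 : ℝ) ^ N * f p0 (z - c)
      = ∑ u : Fin N → K4, fhat p0 u * χ (B u z) * χ (B u c) := by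
    intro c _
    rw [L2]
    apply Finset.sum_congr rfl
    intro u _
    rw [sub_eq_add', B_add_right, chi_add]
    ring
  rw [Finset.sum_congr rfl step, Finset.sum_comm]
  apply Finset.sum_congr rfl
  intro u _
  rw [S, Finset.mul_sum]

lemma f_nonneg_eq (v : Fin N → K4) :
    f p0 v = p0 ^ (N - hammingNorm v) * ((1 - p0) / 3) ^ hammingNorm v := by
  unfold f
  rw [← Finset.prod_filter_mul_prod_filter_not Finset.univ (fun i => v i = 0)]
  have h1 : ∏ i ∈ Finset.univ.filter (fun i => v i = 0), g p0 (v i)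
      = p0 ^ (Finset.univ.filter (fun i => v i = 0)).card := by
    calc ∏ i ∈ Finset.univ.filter (fun i => v i = 0), g p0 (v i)
        = ∏ _i ∈ Finset.univ.filter (fun i => v i = 0), p0 :=
          Finset.prod_congr rfl (fun i hi => by
            rw [Finset.mem_filter] at hi
            simp [g, hi.2])
      _ = _ := Finset.prod_const _
  have h2 : ∏ i ∈ Finset.univ.filter (fun i => ¬ v i = 0), g p0 (v i)
      = ((1 - p0) / 3) ^ (Finset.univ.filter (fun i => ¬ v i = 0)).card := by
    calc ∏ i ∈ Finset.univ.filter (fun i => ¬ v i = 0), g p0 (v i)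
        = ∏ _i ∈ Finset.univ.filter (fun i => ¬ v i = 0), ((1 - p0) / 3) :=
          Finset.prod_congr rfl (fun i hi => by
            rw [Finset.mem_filter] at hi
            simp [g, hi.2])
      _ = _ := Finset.prod_const _
  have hw : (Finset.univ.filter (fun i => ¬ v i = 0)).card = hammingNorm v := by
    rfl
  have hcard := Finset.card_filter_add_card_filter_not
    (s := (Finset.univ : Finset (Fin N))) (p := fun i => v i = 0)
  rw [Finset.card_univ, Fintype.card_fin] at hcard
  have hle : hammingNorm v ≤ N := by omega
  have h0 : (Finset.univ.filter (fun i => v i = 0)).card = N - hammingNorm v := by omega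
  rw [h1, h2, hw, h0]

end Main

end KloveAux

open KloveAux in
/-- Pointwise coset inequality (quaternary analogue of Kløve's Theorem 1.19):
`F_{z−C}(p0) ≤ F_C(p0)` for `p0 ∈ [1/4, 1]`. -/
theorem translate_Fw_le {N : ℕ} (hN : 1 ≤ N)
    (C : Submodule (GaloisField 2 2) (Fin N → GaloisField 2 2))
    (z : Fin N → GaloisField 2 2) (p0 : ℝ) (hp0 : p0 ∈ Set.Icc (1 / 4 : ℝ) 1) :
    Fw (translateSet z (codeFinset C)) p0 ≤ Fw (codeFinset C) p0 := by
  obtain ⟨hp1, hp2⟩ := hp0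
  have hghat : ∀ x : K4, 0 ≤ ghat p0 x := by
    intro x
    unfold ghat
    split
    · norm_num
    · linarith
  have hfhat : ∀ u : Fin N → K4, 0 ≤ fhat p0 u :=
    fun u => Finset.prod_nonneg (fun i _ => hghat _)
  have hsum : ∑ c ∈ codeFinset C, f p0 (z - c) ≤ ∑ c ∈ codeFinset C, f p0 c := by
    have h4 : (0:ℝ) < 4 ^ N := by positivity
    rw [← mul_le_mul_iff_right₀ h4, key_id p0 C z]
    have hz0 : (4:ℝ) ^ N * ∑ c ∈ codeFinset C, f p0 c
        = ∑ u : Fin N → K4, fhat p0 u * χ (B u 0) * S C u := by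
      rw [← key_id p0 C 0]
      congr 1
      apply Finset.sum_congr rfl
      intro c _
      congr 1
      funext i
      simp [CharTwo.neg_eq]
    rw [hz0]
    apply Finset.sum_le_sum
    intro u _
    have hB0 : B u (0 : Fin N → K4) = 0 := by simp [B]
    have hle : fhat p0 u * χ (B u z) ≤ fhat p0 u * χ (B u 0) := by
      rw [hB0, chi_zero, mul_one]
      calc fhat p0 u * χ (B u z) ≤ fhat p0 u * 1 :=
            mul_le_mul_of_nonneg_left (chi_le_one _) (hfhat u)
        _ = fhat p0 u := mul_one _
    exact mul_le_mul_of_nonneg_right hle (S_nonneg C u)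
  have hinj : Function.Injective (fun c : Fin N → K4 => z - c) :=
    fun a b h => sub_right_injective h
  have hFwT : Fw (translateSet z (codeFinset C)) p0
      = ((codeFinset C).card : ℝ)⁻¹ * ∑ c ∈ codeFinset C, f p0 (z - c) := by
    rw [Fw, translateSet, Finset.card_image_of_injective _ hinj,
      Finset.sum_image (fun a _ b _ h => hinj h)]
    congr 1
    exact Finset.sum_congr rfl (fun c _ => (f_nonneg_eq p0 (z - c)).symm)
  have hFwC : Fw (codeFinset C) p0
      = ((codeFinset C).card : ℝ)⁻¹ * ∑ c ∈ codeFinset C, f p0 c := by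
    rw [Fw]
    congr 1
    exact Finset.sum_congr rfl (fun c _ => (f_nonneg_eq p0 c).symm)
  rw [hFwT, hFwC]
  exact mul_le_mul_of_nonneg_left hsum (by positivity)
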